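/- Let 0 < r₁ ≤ r₂ and consider the MMSM instance with barrier [0, 2r₁ + 2r₂] × {0} and two sensors both located at (r₁ + r₂, 0), sensor 1 with radius r₁ and sensor 2 with radius r₂. Then the instance is feasible with respect to r₂, and every relocation that covers the barrier has some sensor with movement at least r₂; hence the minimum possible maximum movement equals r₂. -/

import Mathlib

/-- The MMSM instance with sensors at `(x i, y i)` of radii `r i` and barrier `[0, M]`
is feasible with respect to movement bound `D`. -/
def Feasible {n : ℕ} (x y r : Fin n → ℝ) (M D : ℝ) : Prop :=
  ∃ (T : Finset (Fin n)) (p : Fin n → ℝ),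
    (∀ i ∈ T, Real.sqrt ((x i - p i) ^ 2 + (y i) ^ 2) ≤ D) ∧
    ∀ q ∈ Set.Icc (0 : ℝ) M, ∃ i ∈ T, |q - p i| ≤ r i

/-- For `0 < r₁ ≤ r₂`, the MMSM instance with barrier `[0, 2r₁ + 2r₂]` and two sensors
both at `(r₁ + r₂, 0)` with radii `r₁` and `r₂`, is feasible with respect to `r₂`;
every covering relocation moves some sensor at least `r₂`; hence the minimum possible
maximum movement equals `r₂`. -/
theorem stmt_8 (r₁ r₂ : ℝ) (h1 : 0 < r₁) (h12 : r₁ ≤ r₂) :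
    Feasible ![r₁ + r₂, r₁ + r₂] ![0, 0] ![r₁, r₂] (2 * r₁ + 2 * r₂) r₂ ∧
    (∀ (T : Finset (Fin 2)) (p : Fin 2 → ℝ),
      (∀ q ∈ Set.Icc (0 : ℝ) (2 * r₁ + 2 * r₂), ∃ i ∈ T, |q - p i| ≤ ![r₁, r₂] i) →
      ∃ i ∈ T, r₂ ≤
        Real.sqrt ((![r₁ + r₂, r₁ + r₂] i - p i) ^ 2 + (![(0 : ℝ), 0] i) ^ 2)) ∧
    IsLeast {D : ℝ | 0 ≤ D ∧
        Feasible ![r₁ + r₂, r₁ + r₂] ![0, 0] ![r₁, r₂] (2 * r₁ + 2 * r₂) D} r₂ := by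
  have h2 : 0 < r₂ := lt_of_lt_of_le h1 h12
  have hM : (0:ℝ) ≤ 2 * r₁ + 2 * r₂ := by nlinarith
  have hsq : ∀ (p : Fin 2 → ℝ) (k : Fin 2),
      Real.sqrt ((![r₁ + r₂, r₁ + r₂] k - p k) ^ 2 + (![(0:ℝ), 0] k) ^ 2)
        = |r₁ + r₂ - p k| := by
    intro p k
    fin_cases k <;> simp [Real.sqrt_sq_eq_abs]
  have hfeas : Feasible ![r₁ + r₂, r₁ + r₂] ![0, 0] ![r₁, r₂] (2 * r₁ + 2 * r₂) r₂ := by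
    refine ⟨{0, 1}, ![r₁, 2 * r₁ + r₂], ?_, ?_⟩
    · intro i _
      rw [hsq]
      fin_cases i
      · simp only [Fin.mk_zero, Matrix.cons_val_zero]
        rw [abs_of_nonneg (by linarith)]; linarith
      · simp only [Fin.mk_one, Matrix.cons_val_one, Matrix.head_cons, Matrix.cons_val_zero]
        rw [abs_of_nonpos (by linarith)]; linarith
    · rintro q ⟨hq0, hqM⟩
      rcases le_or_gt q (2 * r₁) with h | h
      · refine ⟨0, by simp, ?_⟩
        simp only [Matrix.cons_val_zero]
        rw [abs_le]; constructor <;> linarith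
      · refine ⟨1, by simp, ?_⟩
        simp only [Matrix.cons_val_one, Matrix.head_cons, Matrix.cons_val_zero]
        rw [abs_le]; constructor <;> linarith
  have key : ∀ (T : Finset (Fin 2)) (p : Fin 2 → ℝ),
      (∀ q ∈ Set.Icc (0 : ℝ) (2 * r₁ + 2 * r₂), ∃ i ∈ T, |q - p i| ≤ ![r₁, r₂] i) →
      ∃ i ∈ T, r₂ ≤
        Real.sqrt ((![r₁ + r₂, r₁ + r₂] i - p i) ^ 2 + (![(0 : ℝ), 0] i) ^ 2) := by
    intro T p hcov
    obtain ⟨i, hiT, hi0⟩ := hcov 0 ⟨le_refl 0, hM⟩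
    obtain ⟨j, hjT, hjM⟩ := hcov (2 * r₁ + 2 * r₂) ⟨hM, le_refl _⟩
    fin_cases i <;> fin_cases j <;>
      simp only [Fin.mk_zero, Fin.mk_one, Fin.isValue, Matrix.cons_val_zero,
        Matrix.cons_val_one, Matrix.head_cons] at hi0 hjM hiT hjT
    · refine ⟨0, hiT, ?_⟩
      rw [hsq]
      rw [abs_le] at hi0
      calc r₂ ≤ r₁ + r₂ - p 0 := by linarith [hi0.2]
        _ ≤ |r₁ + r₂ - p 0| := le_abs_self _
    · refine ⟨0, hiT, ?_⟩
      rw [hsq]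
      rw [abs_le] at hi0
      calc r₂ ≤ r₁ + r₂ - p 0 := by linarith [hi0.2]
        _ ≤ |r₁ + r₂ - p 0| := le_abs_self _
    · refine ⟨0, hjT, ?_⟩
      rw [hsq]
      rw [abs_le] at hjM
      calc r₂ ≤ p 0 - (r₁ + r₂) := by linarith [hjM.1]
        _ ≤ |p 0 - (r₁ + r₂)| := le_abs_self _
        _ = |r₁ + r₂ - p 0| := abs_sub_comm _ _
    · exfalso
      rw [abs_le] at hi0 hjM
      linarith [hi0.2, hjM.1]
  refine ⟨hfeas, key, ⟨⟨le_of_lt h2, hfeas⟩, ?_⟩⟩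
  rintro D ⟨_, T, p, hmov, hcov⟩
  obtain ⟨i, hiT, hge⟩ := key T p hcov
  exact le_trans hge (hmov i hiT)
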